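/- Consider the system y(t+1) = B(t) y(t), where each B(t) is an N×N row-stochastic matrix satisfying the balanced asymmetry condition with a common constant M ≥ 1. If the sequence of matrices B(t), t ≥ 0, has the absolute infinite flow property, then global consensus is reached: for every initial value y(0) ∈ ℝ^N there exists y* ∈ ℝ such that lim_{t→∞} y_i(t) = y* for all i. -/

import Mathlib

open Filter Finset

theorem stmt15 (N : ℕ) (hN : 2 ≤ N) (M : ℝ) (hM : 1 ≤ M)
    (B : ℕ → Matrix (Fin N) (Fin N) ℝ)
    (hnonneg : ∀ t i j, 0 ≤ B t i j)
    (hrow : ∀ t i, ∑ j, B t i j = 1)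
    (hbal : ∀ t : ℕ, ∀ S1 S2 : Finset (Fin N), S1.Nonempty → S1 ≠ Finset.univ →
      S2.Nonempty → S2 ≠ Finset.univ → S1.card = S2.card →
      ∑ i ∈ S1ᶜ, ∑ j ∈ S2, B t i j ≤ M * ∑ i ∈ S1, ∑ j ∈ S2ᶜ, B t i j)
    (haif : ∀ S : ℕ → Finset (Fin N),
      (∀ t, (S t).Nonempty ∧ S t ≠ Finset.univ) →
      (∀ t, (S t).card = (S 0).card) →
      Tendsto (fun n => ∑ t ∈ Finset.range n,
        ((∑ i ∈ (S (t + 1))ᶜ, ∑ j ∈ S t, B t i j) +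
          ∑ i ∈ S (t + 1), ∑ j ∈ (S t)ᶜ, B t i j)) atTop atTop) :
    ∀ y : ℕ → Fin N → ℝ,
      (∀ t i, y (t + 1) i = ∑ j, B t i j * y t j) →
      ∃ c : ℝ, ∀ i, Tendsto (fun t => y t i) atTop (nhds c) := by
  intro y hy
  have hNpos : 0 < N := by omega
  -- uniform bound on the trajectory
  obtain ⟨Cy, hCy0, hCy⟩ : ∃ C : ℝ, 0 ≤ C ∧ ∀ t i, |y t i| ≤ C := by
    have hne : (univ : Finset (Fin N)).Nonempty := ⟨⟨0, hNpos⟩, mem_univ _⟩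
    refine ⟨univ.sup' hne (fun i => |y 0 i|),
      le_trans (abs_nonneg (y 0 (⟨0, hNpos⟩ : Fin N))) (le_sup' (fun i => |y 0 i|) (mem_univ (⟨0, hNpos⟩ : Fin N))), ?_⟩
    intro t
    induction t with
    | zero => intro i; exact le_sup' (fun i => |y 0 i|) (mem_univ i)
    | succ t ih =>
      intro i
      rw [hy]
      calc |∑ j, B t i j * y t j| ≤ ∑ j, |B t i j * y t j| := Finset.abs_sum_le_sum_abs _ _
        _ ≤ ∑ j, B t i j * univ.sup' hne (fun i => |y 0 i|) := Finset.sum_le_sum (fun j _ => by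
              rw [abs_mul, abs_of_nonneg (hnonneg t i j)]
              exact mul_le_mul_of_nonneg_left (ih j) (hnonneg t i j))
        _ = univ.sup' hne (fun i => |y 0 i|) := by rw [← Finset.sum_mul, hrow, one_mul]
  -- sorting permutations and sorted vectors
  set σ : ℕ → Equiv.Perm (Fin N) := fun t => Tuple.sort (y t) with hσdef
  set z : ℕ → Fin N → ℝ := fun t => y t ∘ Tuple.sort (y t) with hzdef
  have hzy : ∀ t i, z t i = y t (σ t i) := fun t i => rfl
  have hzmono : ∀ t, Monotone (z t) := fun t => Tuple.monotone_sort (y t)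
  have hzbd : ∀ t i, |z t i| ≤ Cy := fun t i => hCy t _
  set P : ℕ → Fin N → Fin N → ℝ := fun t i j => B t (σ (t+1) i) (σ t j) with hPdef
  have hPnn : ∀ t i j, 0 ≤ P t i j := fun t i j => hnonneg _ _ _
  have hProw : ∀ t i, ∑ j, P t i j = 1 := by
    intro t i
    rw [← hrow t (σ (t+1) i)]
    exact Equiv.sum_comp (σ t) _
  have hzrec : ∀ t i, z (t+1) i = ∑ j, P t i j * z t j := by
    intro t i
    show y (t+1) (σ (t+1) i) = _
    rw [hy]
    exact (Equiv.sum_comp (σ t) (fun j => B t (σ (t+1) i) j * y t j)).symm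
  -- clip and gaps
  set clip : ℕ → Fin N := fun v => (⟨min v (N-1), by omega⟩ : Fin N) with hclipdef
  set gap : ℕ → ℕ → ℝ := fun c t => z t (clip c) - z t (clip (c-1)) with hgapdef
  have hclipmono : Monotone clip := by
    intro a b hab
    rw [Fin.le_def]
    simp only [hclipdef]
    omega
  have hgapnn : ∀ c t, 0 ≤ gap c t := by
    intro c t
    have := hzmono t (hclipmono (Nat.sub_le c 1))
    simp only [hgapdef]
    linarith
  have hgap0 : ∀ c t, (c = 0 ∨ N ≤ c) → gap c t = 0 := by
    intro c t hc
    have h : clip c = clip (c-1) := by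
      apply Fin.ext
      simp only [hclipdef]
      omega
    simp only [hgapdef, h, sub_self]
  -- cut sets
  set Sc : ℕ → Finset (Fin N) := fun c => univ.filter (fun i => (i : ℕ) < c) with hScdef
  have hSccard : ∀ c, c ≤ N → (Sc c).card = c := by
    intro c hc
    rcases eq_or_lt_of_le hc with heq | hlt
    · have h : Sc c = univ := by
        ext i
        simp only [hScdef, Finset.mem_filter, Finset.mem_univ, true_and, iff_true]
        omega
      rw [h, Finset.card_univ, Fintype.card_fin, heq]
    · have h : Sc c = Finset.Iio (⟨c, hlt⟩ : Fin N) := by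
        ext i
        simp [hScdef, Fin.lt_def]
      rw [h, Fin.card_Iio]
  set φ : ℕ → ℕ → ℝ := fun c t => ∑ i ∈ Sc c, ∑ j ∈ (Sc c)ᶜ, P t i j with hφdef
  set ψ : ℕ → ℕ → ℝ := fun c t => ∑ i ∈ (Sc c)ᶜ, ∑ j ∈ Sc c, P t i j with hψdef
  have hφnn : ∀ c t, 0 ≤ φ c t :=
    fun c t => Finset.sum_nonneg fun i _ => Finset.sum_nonneg fun j _ => hPnn t i j
  have hψnn : ∀ c t, 0 ≤ ψ c t :=
    fun c t => Finset.sum_nonneg fun i _ => Finset.sum_nonneg fun j _ => hPnn t i j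
  have hmapcompl : ∀ (e : Equiv.Perm (Fin N)) (S : Finset (Fin N)),
      (S.map e.toEmbedding)ᶜ = Sᶜ.map e.toEmbedding := by
    intro e S
    ext x
    simp [Finset.mem_map_equiv]
  have hmapsum : ∀ (e : Equiv.Perm (Fin N)) (S : Finset (Fin N)) (f : Fin N → ℝ),
      ∑ i ∈ S.map e.toEmbedding, f i = ∑ i ∈ S, f (e i) := by
    intro e S f
    rw [Finset.sum_map]
    rfl
  -- the two flow identities (rewriting sums over images of cut sets)
  have hψid : ∀ c t, ∑ i ∈ ((Sc c).map (σ (t+1)).toEmbedding)ᶜ, ∑ j ∈ (Sc c).map (σ t).toEmbedding, B t i j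
      = ψ c t := by
    intro c t
    rw [hmapcompl, hmapsum]
    refine Finset.sum_congr rfl fun i _ => ?_
    rw [hmapsum]
  have hφid : ∀ c t, ∑ i ∈ (Sc c).map (σ (t+1)).toEmbedding, ∑ j ∈ ((Sc c).map (σ t).toEmbedding)ᶜ, B t i j
      = φ c t := by
    intro c t
    rw [hmapcompl, hmapsum]
    refine Finset.sum_congr rfl fun i _ => ?_
    rw [hmapsum]
  have hScne : ∀ c, 1 ≤ c → c < N → ∀ (e : Equiv.Perm (Fin N)),
      ((Sc c).map e.toEmbedding).Nonempty ∧ (Sc c).map e.toEmbedding ≠ univ := by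
    intro c h1 h2 e
    constructor
    · rw [← Finset.card_pos, Finset.card_map, hSccard c (le_of_lt h2)]
      omega
    · intro h
      have := congrArg Finset.card h
      rw [Finset.card_map, hSccard c (le_of_lt h2), Finset.card_univ, Fintype.card_fin] at this
      omega
  have hψφ : ∀ c t, 1 ≤ c → c < N → ψ c t ≤ M * φ c t := by
    intro c t h1 h2
    have hb := hbal t ((Sc c).map (σ (t+1)).toEmbedding) ((Sc c).map (σ t).toEmbedding)
      (hScne c h1 h2 _).1 (hScne c h1 h2 _).2 (hScne c h1 h2 _).1 (hScne c h1 h2 _).2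
      (by rw [Finset.card_map, Finset.card_map])
    rw [hψid, hφid] at hb
    exact hb
  -- flows in terms of B : link with haif
  have hflow : ∀ c, 1 ≤ c → c < N →
      Tendsto (fun n => ∑ t ∈ Finset.range n, (ψ c t + φ c t)) atTop atTop := by
    intro c h1 h2
    have h := haif (fun t => (Sc c).map (σ t).toEmbedding)
      (fun t => hScne c h1 h2 (σ t))
      (fun t => by rw [Finset.card_map, Finset.card_map])
    refine h.congr fun n => Finset.sum_congr rfl fun t _ => ?_
    rw [hψid c t, hφid c t]
  -- sorted partial sums
  set F : ℕ → ℕ → ℝ := fun k t => ∑ i ∈ Sc k, z t i with hFdef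
  have hFbd : ∀ k t, |F k t| ≤ N * Cy := by
    intro k t
    calc |F k t| ≤ ∑ i ∈ Sc k, |z t i| := Finset.abs_sum_le_sum_abs _ _
      _ ≤ ∑ i ∈ Sc k, Cy := Finset.sum_le_sum fun i _ => hzbd t i
      _ = (Sc k).card * Cy := by rw [Finset.sum_const, nsmul_eq_mul]
      _ ≤ N * Cy := by
          have := Finset.card_le_univ (Sc k)
          have h2 : ((Sc k).card : ℝ) ≤ N := by
            rw [Fintype.card_fin] at this
            exact_mod_cast this
          exact mul_le_mul_of_nonneg_right h2 hCy0
  -- the master inequality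
  have hstar : ∀ k t, k ≤ N →
      gap k t * φ k t - ∑ c ∈ Finset.Ico 1 k, gap c t * ψ c t ≤ F k (t+1) - F k t := by
    intro k t hk
    set e : Fin N → ℕ → ℝ := fun x m => if m + 1 ≤ (x : ℕ) then gap (m+1) t else 0 with hedef
    have htel : ∀ v, z t (clip v) = z t (clip 0) + ∑ m ∈ Finset.range v, gap (m+1) t := by
      intro v
      induction v with
      | zero => simp
      | succ v ih =>
        rw [Finset.sum_range_succ, ← add_assoc, ← ih]
        have hg : gap (v+1) t = z t (clip (v+1)) - z t (clip v) := by
          simp only [hgapdef, Nat.add_sub_cancel]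
        linarith
    have hzexp : ∀ x : Fin N, z t x = z t (clip 0) + ∑ m ∈ Finset.range (N-1), e x m := by
      intro x
      have h1 : (clip (x : ℕ)) = x := by
        apply Fin.ext
        simp only [hclipdef]
        have := x.is_lt
        omega
      have h2 : ∑ m ∈ Finset.range (N-1), e x m = ∑ m ∈ Finset.range (x : ℕ), gap (m+1) t := by
        simp only [hedef]
        rw [← Finset.sum_filter]
        apply Finset.sum_congr _ (fun _ _ => rfl)
        ext m
        simp only [Finset.mem_filter, Finset.mem_range]
        have := x.is_lt
        omega
      calc z t x = z t (clip (x : ℕ)) := by rw [h1]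
        _ = z t (clip 0) + ∑ m ∈ Finset.range (x : ℕ), gap (m+1) t := htel _
        _ = z t (clip 0) + ∑ m ∈ Finset.range (N-1), e x m := by rw [h2]
    have hstep : ∀ i : Fin N, z (t+1) i - z t i
        = ∑ m ∈ Finset.range (N-1), ((∑ j : Fin N, P t i j * e j m) - e i m) := by
      intro i
      have h1 : ∑ j, P t i j * z t j
          = z t (clip 0) + ∑ m ∈ Finset.range (N-1), ∑ j : Fin N, P t i j * e j m := by
        calc ∑ j, P t i j * z t j
            = ∑ j, (P t i j * z t (clip 0) + ∑ m ∈ Finset.range (N-1), P t i j * e j m) :=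
              Finset.sum_congr rfl fun j _ => by rw [hzexp j, mul_add, Finset.mul_sum]
          _ = (∑ j, P t i j) * z t (clip 0) + ∑ j, ∑ m ∈ Finset.range (N-1), P t i j * e j m := by
              rw [Finset.sum_add_distrib, Finset.sum_mul]
          _ = z t (clip 0) + ∑ m ∈ Finset.range (N-1), ∑ j : Fin N, P t i j * e j m := by
              rw [hProw, one_mul, Finset.sum_comm]
      rw [hzrec t i, h1, hzexp i, Finset.sum_sub_distrib]
      ring
    have hΔ : F k (t+1) - F k t
        = ∑ m ∈ Finset.range (N-1), ∑ i ∈ Sc k, ((∑ j : Fin N, P t i j * e j m) - e i m) := by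
      calc F k (t+1) - F k t = ∑ i ∈ Sc k, (z (t+1) i - z t i) := (Finset.sum_sub_distrib ..).symm
        _ = ∑ i ∈ Sc k, ∑ m ∈ Finset.range (N-1), ((∑ j : Fin N, P t i j * e j m) - e i m) :=
            Finset.sum_congr rfl fun i _ => hstep i
        _ = _ := Finset.sum_comm
    have hDm : ∀ m ∈ Finset.range (N-1),
        (if m+1 = k then gap k t * φ k t else 0) - (if m+1 < k then gap (m+1) t * ψ (m+1) t else 0)
          ≤ ∑ i ∈ Sc k, ((∑ j : Fin N, P t i j * e j m) - e i m) := by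
      intro m hm
      rw [Finset.mem_range] at hm
      have hcompl : (Sc (m+1))ᶜ = univ.filter (fun j : Fin N => m+1 ≤ (j:ℕ)) := by
        ext j
        simp only [Finset.mem_compl, hScdef, Finset.mem_filter, Finset.mem_univ, true_and]
        omega
      have hT1 : ∀ i : Fin N, ∑ j : Fin N, P t i j * e j m
          = gap (m+1) t * ∑ j ∈ (Sc (m+1))ᶜ, P t i j := by
        intro i
        calc ∑ j : Fin N, P t i j * e j m
            = ∑ j : Fin N, (if m+1 ≤ (j:ℕ) then P t i j * gap (m+1) t else 0) := by
              refine Finset.sum_congr rfl fun j _ => ?_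
              simp only [hedef]
              split <;> simp
          _ = ∑ j ∈ univ.filter (fun j : Fin N => m+1 ≤ (j:ℕ)), P t i j * gap (m+1) t :=
              (Finset.sum_filter _ _).symm
          _ = gap (m+1) t * ∑ j ∈ (Sc (m+1))ᶜ, P t i j := by
              rw [hcompl, ← Finset.sum_mul, mul_comm]
      set D := (Sc k).filter (fun i : Fin N => m+1 ≤ (i:ℕ)) with hDdef
      have hT2 : ∑ i ∈ Sc k, e i m = gap (m+1) t * (D.card : ℝ) := by
        calc ∑ i ∈ Sc k, e i m = ∑ i ∈ Sc k, (if m+1 ≤ (i:ℕ) then gap (m+1) t else 0) := by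
              simp only [hedef]
          _ = ∑ i ∈ D, gap (m+1) t := (Finset.sum_filter _ _).symm
          _ = gap (m+1) t * (D.card : ℝ) := by rw [Finset.sum_const, nsmul_eq_mul, mul_comm]
      have hRHS : ∑ i ∈ Sc k, ((∑ j : Fin N, P t i j * e j m) - e i m)
          = gap (m+1) t * (∑ i ∈ Sc k, ∑ j ∈ (Sc (m+1))ᶜ, P t i j) - gap (m+1) t * (D.card : ℝ) := by
        rw [Finset.sum_sub_distrib, hT2]
        congr 1
        rw [Finset.mul_sum]
        exact Finset.sum_congr rfl fun i _ => hT1 i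
      rw [hRHS]
      have hsignn : 0 ≤ ∑ i ∈ Sc k, ∑ j ∈ (Sc (m+1))ᶜ, P t i j :=
        Finset.sum_nonneg fun i _ => Finset.sum_nonneg fun j _ => hPnn t i j
      rcases lt_trichotomy (m+1) k with hlt | heq | hgt
      · rw [if_neg (by omega), if_pos hlt]
        -- key counting estimate
        have hDsub1 : D ⊆ (Sc (m+1))ᶜ := by
          intro i hi
          rw [hDdef, Finset.mem_filter] at hi
          rw [Finset.mem_compl]
          simp only [hScdef, Finset.mem_filter, Finset.mem_univ, true_and]
          omega
        have hDsub2 : D ⊆ Sc k := Finset.filter_subset _ _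
        have h1 : ∑ i ∈ D, ∑ j ∈ Sc (m+1), P t i j ≤ ψ (m+1) t :=
          Finset.sum_le_sum_of_subset_of_nonneg hDsub1
            (fun i _ _ => Finset.sum_nonneg fun j _ => hPnn t i j)
        have h2 : ∑ i ∈ D, ∑ j ∈ (Sc (m+1))ᶜ, P t i j ≤ ∑ i ∈ Sc k, ∑ j ∈ (Sc (m+1))ᶜ, P t i j :=
          Finset.sum_le_sum_of_subset_of_nonneg hDsub2
            (fun i _ _ => Finset.sum_nonneg fun j _ => hPnn t i j)
        have h3 : (D.card : ℝ) = ∑ i ∈ D, ∑ j ∈ Sc (m+1), P t i j + ∑ i ∈ D, ∑ j ∈ (Sc (m+1))ᶜ, P t i j := by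
          rw [← Finset.sum_add_distrib]
          have : ∀ i ∈ D, ∑ j ∈ Sc (m+1), P t i j + ∑ j ∈ (Sc (m+1))ᶜ, P t i j = 1 := by
            intro i _
            rw [Finset.sum_add_sum_compl]
            exact hProw t i
          rw [Finset.sum_congr rfl this, Finset.sum_const, nsmul_eq_mul, mul_one]
        have hcount : (D.card : ℝ) ≤ ψ (m+1) t + ∑ i ∈ Sc k, ∑ j ∈ (Sc (m+1))ᶜ, P t i j := by
          rw [h3]; linarith
        have := mul_le_mul_of_nonneg_left hcount (hgapnn (m+1) t)
        linarith
      · have hDempty : D = ∅ := by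
          rw [hDdef]
          refine Finset.filter_false_of_mem ?_
          intro i hi
          simp only [hScdef, Finset.mem_filter, Finset.mem_univ, true_and] at hi
          omega
        rw [if_pos heq, if_neg (by omega), hDempty]
        rw [heq]
        simp
        exact le_rfl
      · have hDempty : D = ∅ := by
          rw [hDdef]
          refine Finset.filter_false_of_mem ?_
          intro i hi
          simp only [hScdef, Finset.mem_filter, Finset.mem_univ, true_and] at hi
          omega
        rw [if_neg (by omega), if_neg (by omega), hDempty]
        simp only [Finset.card_empty, Nat.cast_zero, mul_zero, sub_zero, sub_zero]
        exact mul_nonneg (hgapnn (m+1) t) hsignn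
    have hsum1 : ∑ m ∈ Finset.range (N-1), (if m+1 = k then gap k t * φ k t else 0)
        = gap k t * φ k t := by
      by_cases hkk : 1 ≤ k ∧ k ≤ N-1
      · rw [Finset.sum_eq_single (k-1)]
        · rw [if_pos (by omega)]
        · intro m hm hne
          rw [if_neg (by omega)]
        · intro h
          exact absurd (Finset.mem_range.mpr (by omega)) h
      · have hg : gap k t = 0 := hgap0 k t (by omega)
        rw [hg, zero_mul]
        exact Finset.sum_eq_zero fun m hm => if_neg (by rw [Finset.mem_range] at hm; omega)
    have hsum2 : ∑ m ∈ Finset.range (N-1), (if m+1 < k then gap (m+1) t * ψ (m+1) t else 0)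
        = ∑ c ∈ Finset.Ico 1 k, gap c t * ψ c t := by
      rw [← Finset.sum_filter]
      have hf : (Finset.range (N-1)).filter (fun m => m+1 < k) = Finset.range (k-1) := by
        ext m
        simp only [Finset.mem_filter, Finset.mem_range]
        omega
      rw [hf, Finset.sum_Ico_eq_sum_range]
      refine Finset.sum_congr (by norm_num) fun m _ => by rw [add_comm]
    calc gap k t * φ k t - ∑ c ∈ Finset.Ico 1 k, gap c t * ψ c t
        = ∑ m ∈ Finset.range (N-1),
            ((if m+1 = k then gap k t * φ k t else 0) - (if m+1 < k then gap (m+1) t * ψ (m+1) t else 0)) := by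
          rw [Finset.sum_sub_distrib, hsum1, hsum2]
      _ ≤ ∑ m ∈ Finset.range (N-1), ∑ i ∈ Sc k, ((∑ j : Fin N, P t i j * e j m) - e i m) :=
          Finset.sum_le_sum hDm
      _ = F k (t+1) - F k t := hΔ.symm
  -- summability of gap * φ
  -- from a bound on ∑ gap*φ derive a bound on ∑ gap*ψ
  have hψsum : ∀ (c : ℕ), 1 ≤ c → c < N → ∀ (Db : ℝ),
      (∀ n, ∑ t ∈ Finset.range n, gap c t * φ c t ≤ Db) →
      ∀ n, ∑ t ∈ Finset.range n, gap c t * ψ c t ≤ M * max Db 0 := by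
    intro c h1 h2 Db hDb n
    calc ∑ t ∈ Finset.range n, gap c t * ψ c t
        ≤ ∑ t ∈ Finset.range n, M * (gap c t * φ c t) := by
          refine Finset.sum_le_sum fun t _ => ?_
          have hb := hψφ c t h1 h2
          calc gap c t * ψ c t ≤ gap c t * (M * φ c t) :=
                mul_le_mul_of_nonneg_left hb (hgapnn c t)
            _ = M * (gap c t * φ c t) := by ring
      _ = M * ∑ t ∈ Finset.range n, gap c t * φ c t := by rw [Finset.mul_sum]
      _ ≤ M * max Db 0 :=
          mul_le_mul_of_nonneg_left (le_trans (hDb n) (le_max_left _ _)) (by linarith)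
  have hQ : ∀ k, ∃ C : ℝ, ∀ n, ∑ t ∈ Finset.range n, gap k t * φ k t ≤ C := by
    intro k
    induction k using Nat.strong_induction_on with
    | _ k ih =>
    rcases le_or_gt k N with hk | hk
    swap
    · exact ⟨0, fun n => le_of_eq (Finset.sum_eq_zero fun t _ => by
        rw [hgap0 k t (Or.inr (by omega)), zero_mul])⟩
    have hsub : ∀ c ∈ Finset.Ico 1 k, ∃ C : ℝ, 0 ≤ C ∧
        ∀ n, ∑ t ∈ Finset.range n, gap c t * ψ c t ≤ C := by
      intro c hc
      rw [Finset.mem_Ico] at hc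
      obtain ⟨Db, hDb⟩ := ih c hc.2
      refine ⟨M * max Db 0, by positivity, hψsum c hc.1 (by omega) Db hDb⟩
    choose! Cc hCc0 hCc using hsub
    refine ⟨2 * (N * Cy) + ∑ c ∈ Finset.Ico 1 k, Cc c, fun n => ?_⟩
    have ht : ∀ t, gap k t * φ k t
        ≤ (F k (t+1) - F k t) + ∑ c ∈ Finset.Ico 1 k, gap c t * ψ c t := by
      intro t
      have := hstar k t hk
      linarith
    calc ∑ t ∈ Finset.range n, gap k t * φ k t
        ≤ ∑ t ∈ Finset.range n, ((F k (t+1) - F k t) + ∑ c ∈ Finset.Ico 1 k, gap c t * ψ c t) :=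
          Finset.sum_le_sum fun t _ => ht t
      _ = (F k n - F k 0) + ∑ c ∈ Finset.Ico 1 k, ∑ t ∈ Finset.range n, gap c t * ψ c t := by
          rw [Finset.sum_add_distrib, Finset.sum_range_sub (F k), Finset.sum_comm]
      _ ≤ 2 * (N * Cy) + ∑ c ∈ Finset.Ico 1 k, Cc c := by
          have hb1 := le_of_abs_le (hFbd k n)
          have hb2 := neg_le_of_abs_le (hFbd k 0)
          have hb3 : ∑ c ∈ Finset.Ico 1 k, ∑ t ∈ Finset.range n, gap c t * ψ c t
              ≤ ∑ c ∈ Finset.Ico 1 k, Cc c :=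
            Finset.sum_le_sum fun c hc => hCc c hc n
          linarith
  choose Cq hCq using hQ
  -- bound for the correction series
  have hR : ∀ k, k ≤ N → ∃ C : ℝ, 0 ≤ C ∧
      ∀ n, ∑ t ∈ Finset.range n, ∑ c ∈ Finset.Ico 1 k, gap c t * ψ c t ≤ C := by
    intro k hk
    refine ⟨∑ c ∈ Finset.Ico 1 k, M * max (Cq c) 0,
      Finset.sum_nonneg fun c _ => by positivity, fun n => ?_⟩
    rw [Finset.sum_comm]
    refine Finset.sum_le_sum fun c hc => ?_
    rw [Finset.mem_Ico] at hc
    exact hψsum c hc.1 (by omega) (Cq c) (hCq c) n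
  -- convergence of the bottom partial sums
  have hFconv : ∀ k, k ≤ N → ∃ Lf : ℝ, Tendsto (fun n => F k n) atTop (nhds Lf) := by
    intro k hk
    obtain ⟨CW, hCW0, hCW⟩ := hR k hk
    set W : ℕ → ℝ := fun n => ∑ t ∈ Finset.range n, ∑ c ∈ Finset.Ico 1 k, gap c t * ψ c t with hWdef
    have hWsucc : ∀ n, W (n+1) = W n + ∑ c ∈ Finset.Ico 1 k, gap c n * ψ c n := by
      intro n
      simp only [hWdef]
      rw [Finset.sum_range_succ]
    have hWmono : Monotone W := monotone_nat_of_le_succ fun n => by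
      rw [hWsucc]
      exact le_add_of_nonneg_right (Finset.sum_nonneg fun c _ =>
        mul_nonneg (hgapnn c n) (hψnn c n))
    set G : ℕ → ℝ := fun n => F k n + W n with hGdef
    have hGmono : Monotone G := monotone_nat_of_le_succ fun n => by
      have h1 := hstar k n hk
      have h2 : 0 ≤ gap k n * φ k n := mul_nonneg (hgapnn _ _) (hφnn _ _)
      show F k n + W n ≤ F k (n+1) + W (n+1)
      rw [hWsucc]
      linarith
    have hGbdd : BddAbove (Set.range G) := by
      refine ⟨N * Cy + CW, ?_⟩
      rintro x ⟨n, rfl⟩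
      exact add_le_add (le_of_abs_le (hFbd k n)) (hCW n)
    have hWbdd : BddAbove (Set.range W) := by
      refine ⟨CW, ?_⟩
      rintro x ⟨n, rfl⟩
      exact hCW n
    have hG := tendsto_atTop_ciSup hGmono hGbdd
    have hW := tendsto_atTop_ciSup hWmono hWbdd
    refine ⟨(⨆ n, G n) - (⨆ n, W n), ?_⟩
    have := hG.sub hW
    refine this.congr fun n => ?_
    show G n - W n = F k n
    rw [hGdef]
    ring
  have hzconv : ∀ i : Fin N, ∃ L : ℝ, Tendsto (fun t => z t i) atTop (nhds L) := by
    intro i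
    have hi1 : (i : ℕ) + 1 ≤ N := i.is_lt
    obtain ⟨L1, h1⟩ := hFconv ((i : ℕ) + 1) hi1
    obtain ⟨L2, h2⟩ := hFconv (i : ℕ) (by omega)
    have hdiff : ∀ n, F ((i : ℕ) + 1) n - F (i : ℕ) n = z n i := by
      intro n
      have hins : Sc ((i : ℕ) + 1) = insert i (Sc (i : ℕ)) := by
        ext x
        simp only [hScdef, Finset.mem_filter, Finset.mem_univ, true_and, Finset.mem_insert,
          Fin.ext_iff]
        omega
      have hnotmem : i ∉ Sc (i : ℕ) := by
        simp [hScdef]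
      show (∑ x ∈ Sc ((i : ℕ) + 1), z n x) - ∑ x ∈ Sc (i : ℕ), z n x = z n i
      rw [hins, Finset.sum_insert hnotmem]
      ring
    exact ⟨L1 - L2, (h1.sub h2).congr fun n => hdiff n⟩
  choose L hL using hzconv
  -- convergence of each sorted entry
  have hadj : ∀ (c : ℕ) (h1 : 1 ≤ c) (h2 : c < N),
      L ⟨c, h2⟩ = L ⟨c - 1, by omega⟩ := by
    intro c h1 h2
    by_contra hne
    have hle : L ⟨c - 1, by omega⟩ ≤ L ⟨c, h2⟩ :=
      le_of_tendsto_of_tendsto' (hL _) (hL _)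
        (fun t => hzmono t (by simp only [Fin.mk_le_mk]; omega))
    have hγpos : 0 < L ⟨c, h2⟩ - L ⟨c - 1, by omega⟩ := by
      rcases lt_or_eq_of_le hle with h | h
      · linarith
      · exact absurd h.symm hne
    set γ := L ⟨c, h2⟩ - L ⟨c - 1, by omega⟩ with hγdef
    have hgconv : Tendsto (fun t => gap c t) atTop (nhds γ) := by
      have hcl1 : clip c = ⟨c, h2⟩ := by
        apply Fin.ext; simp only [hclipdef]; omega
      have hcl2 : clip (c - 1) = ⟨c - 1, by omega⟩ := by
        apply Fin.ext; simp only [hclipdef]; omega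
      have := (hL ⟨c, h2⟩).sub (hL ⟨c - 1, by omega⟩)
      refine this.congr fun t => ?_
      simp only [hgapdef, hcl1, hcl2]
    obtain ⟨T, hT⟩ := (eventually_atTop.mp
      (hgconv.eventually (eventually_ge_nhds (show γ/2 < γ by linarith))))
    have hφbd : ∀ n, ∑ t ∈ Finset.Ico T n, φ c t ≤ (2/γ) * max (Cq c) 0 := by
      intro n
      calc ∑ t ∈ Finset.Ico T n, φ c t
          ≤ ∑ t ∈ Finset.Ico T n, (2/γ) * (gap c t * φ c t) := by
            refine Finset.sum_le_sum fun t ht => ?_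
            rw [Finset.mem_Ico] at ht
            have hg := hT t ht.1
            have hφ := hφnn c t
            rw [div_mul_eq_mul_div, le_div_iff₀ (by linarith : (0:ℝ) < γ)]
            have hmul : φ c t * (γ/2) ≤ φ c t * gap c t :=
              mul_le_mul_of_nonneg_left hg hφ
            calc φ c t * γ = 2 * (φ c t * (γ/2)) := by ring
              _ ≤ 2 * (φ c t * gap c t) := by linarith
              _ = 2 * (gap c t * φ c t) := by ring
        _ = (2/γ) * ∑ t ∈ Finset.Ico T n, gap c t * φ c t := by rw [Finset.mul_sum]
        _ ≤ (2/γ) * max (Cq c) 0 := by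
            refine mul_le_mul_of_nonneg_left ?_ (by positivity)
            rcases le_or_gt n T with h | h
            · rw [Finset.Ico_eq_empty (by omega)]
              simp [le_max_right]
            · have hsub : Finset.Ico T n ⊆ Finset.range n := by
                intro x hx
                rw [Finset.mem_Ico] at hx
                rw [Finset.mem_range]
                omega
              calc ∑ t ∈ Finset.Ico T n, gap c t * φ c t
                  ≤ ∑ t ∈ Finset.range n, gap c t * φ c t :=
                    Finset.sum_le_sum_of_subset_of_nonneg hsub
                      (fun t _ _ => mul_nonneg (hgapnn c t) (hφnn c t))
                _ ≤ max (Cq c) 0 := le_trans (hCq c n) (le_max_left _ _)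
    have hbnd : ∀ n, ∑ t ∈ Finset.range n, (ψ c t + φ c t)
        ≤ (∑ t ∈ Finset.range T, (ψ c t + φ c t)) + (M + 1) * ((2/γ) * max (Cq c) 0) := by
      intro n
      rcases le_or_gt n T with h | h
      · have hsub : Finset.range n ⊆ Finset.range T := Finset.range_subset_range.mpr h
        have h1 : ∑ t ∈ Finset.range n, (ψ c t + φ c t)
            ≤ ∑ t ∈ Finset.range T, (ψ c t + φ c t) :=
          Finset.sum_le_sum_of_subset_of_nonneg hsub
            (fun t _ _ => add_nonneg (hψnn c t) (hφnn c t))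
        have h2 : (0:ℝ) ≤ (M + 1) * ((2/γ) * max (Cq c) 0) := by positivity
        linarith
      · rw [← Finset.sum_range_add_sum_Ico _ (le_of_lt h)]
        have h1 : ∑ t ∈ Finset.Ico T n, (ψ c t + φ c t)
            ≤ (M + 1) * ∑ t ∈ Finset.Ico T n, φ c t := by
          rw [Finset.mul_sum]
          refine Finset.sum_le_sum fun t ht => ?_
          have := hψφ c t h1 h2
          linarith
        have h2 := hφbd n
        have h3 : (M + 1) * ∑ t ∈ Finset.Ico T n, φ c t
            ≤ (M + 1) * ((2/γ) * max (Cq c) 0) :=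
          mul_le_mul_of_nonneg_left h2 (by linarith)
        linarith
    obtain ⟨n, hn⟩ := ((hflow c h1 h2).eventually_gt_atTop
      ((∑ t ∈ Finset.range T, (ψ c t + φ c t)) + (M + 1) * ((2/γ) * max (Cq c) 0))).exists
    exact absurd (hbnd n) (not_le.mpr hn)
  have hLconst : ∀ i : Fin N, L i = L ⟨0, hNpos⟩ := by
    have hLv : ∀ v, (h : v < N) → L ⟨v, h⟩ = L ⟨0, hNpos⟩ := by
      intro v
      induction v with
      | zero => intro h; rfl
      | succ v ihv =>
        intro h
        have hs := hadj (v+1) (by omega) h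
        simp only [Nat.add_sub_cancel] at hs
        rw [hs, ihv (by omega)]
    intro i
    have := hLv (i : ℕ) i.is_lt
    simpa using this
  refine ⟨L ⟨0, hNpos⟩, fun i => ?_⟩
  have hyz : ∀ t, y t i = z t ((σ t).symm i) := by
    intro t; rw [hzy]; rw [Equiv.apply_symm_apply]
  have h1 : Tendsto (fun t => z t (⟨0, hNpos⟩ : Fin N)) atTop (nhds (L ⟨0, hNpos⟩)) := hL _
  have h2 : Tendsto (fun t => z t (⟨N-1, by omega⟩ : Fin N)) atTop (nhds (L ⟨0, hNpos⟩)) := by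
    rw [← hLconst ⟨N-1, by omega⟩]; exact hL _
  refine tendsto_of_tendsto_of_tendsto_of_le_of_le h1 h2 ?_ ?_
  · intro t; show z t _ ≤ y t i; rw [hyz]; exact hzmono t (by rw [Fin.le_def]; exact Nat.zero_le _)
  · intro t
    show y t i ≤ z t _
    rw [hyz]
    refine hzmono t ?_
    rw [Fin.le_def]
    have := ((σ t).symm i).is_lt
    simp only
    omega
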